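/- Positivity of the doubly anti-symmetrized kernel: let n ≥ 2 and 0 < α < 2. For all x, y in the quarter space I = {z ∈ ℝⁿ : z₁ > 0, z₂ > 0} with x ≠ y, one has K(x,y) := |x − y|^{−(n+α)} − |x − T₁y|^{−(n+α)} − |x − T₂y|^{−(n+α)} + |x − T₁T₂y|^{−(n+α)} ≥ 0. -/

import Mathlib

open MeasureTheory Filter

noncomputable section

/-- the `i`-th coordinate (0-indexed) of a point of `ℝⁿ`; `0` if out of range. -/
def coord {n : ℕ} (x : EuclideanSpace ℝ (Fin n)) (i : ℕ) : ℝ :=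
  if h : i < n then x ⟨i, h⟩ else 0

/-- the reflection about the hyperplane `{xᵢ = 0}` (0-indexed `i`). -/
def reflect {n : ℕ} (i : ℕ) (x : EuclideanSpace ℝ (Fin n)) : EuclideanSpace ℝ (Fin n) :=
  WithLp.toLp 2 (fun j : Fin n => if (j : ℕ) = i then -(x j) else x j)

/-- replace the `i`-th coordinate of `x` by `t`. -/
def setCoord {n : ℕ} (i : ℕ) (x : EuclideanSpace ℝ (Fin n)) (t : ℝ) :
    EuclideanSpace ℝ (Fin n) :=
  WithLp.toLp 2 (fun j : Fin n => if (j : ℕ) = i then t else x j)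

/-- The fractional Laplacian `(-Δ)^{α/2} u (x)` exists and equals `ℓ`
(Cauchy principal value with normalization constant `cnα`). -/
def HasFracLap (n : ℕ) (α cnα : ℝ) (u : EuclideanSpace ℝ (Fin n) → ℝ)
    (x : EuclideanSpace ℝ (Fin n)) (ℓ : ℝ) : Prop :=
  Tendsto (fun ε : ℝ =>
      cnα * ∫ y in {y : EuclideanSpace ℝ (Fin n) | ε ≤ ‖y - x‖},
        (u x - u y) / ‖x - y‖ ^ ((n : ℝ) + α))
    (nhdsWithin 0 (Set.Ioi 0)) (nhds ℓ)

/-- `u ∈ C^{1,1}_loc(U)`: every point of `U` has a neighborhood on which `u` is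
differentiable with Lipschitz derivative. -/
def C11loc {n : ℕ} (u : EuclideanSpace ℝ (Fin n) → ℝ)
    (U : Set (EuclideanSpace ℝ (Fin n))) : Prop :=
  ∀ x ∈ U, ∃ V ∈ nhds x, ∃ f' : EuclideanSpace ℝ (Fin n) → (EuclideanSpace ℝ (Fin n) →L[ℝ] ℝ),
    (∀ y ∈ V, HasFDerivAt u (f' y) y) ∧ ∃ L : NNReal, LipschitzOnWith L f' V

open Set


lemma convexOn_rpow_neg {p : ℝ} (hp : 0 < p) :
    ConvexOn ℝ (Set.Ioi (0:ℝ)) fun u : ℝ => u ^ (-p) := by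
  apply convexOn_of_deriv2_nonneg' (convex_Ioi 0)
  · intro x hx
    exact (Real.differentiableAt_rpow_const_of_ne _ (ne_of_gt hx)).differentiableWithinAt
  · have hcongr : ∀ x ∈ Set.Ioi (0:ℝ),
        deriv (fun u : ℝ => u ^ (-p)) x = -p * x ^ (-p - 1) := by
      intro x hx
      exact Real.deriv_rpow_const x (-p)
    refine DifferentiableOn.congr ?_ hcongr
    intro x hx
    exact (((Real.differentiableAt_rpow_const_of_ne _ (ne_of_gt hx)).const_mul
      (-p))).differentiableWithinAt
  · intro x hx
    have hx0 : (0:ℝ) < x := hx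
    have h1 : deriv (fun u : ℝ => u ^ (-p)) =ᶠ[nhds x] fun u => -p * u ^ (-p - 1) := by
      filter_upwards [eventually_gt_nhds hx0] with u hu
      exact Real.deriv_rpow_const u (-p)
    have h2 : deriv^[2] (fun u : ℝ => u ^ (-p)) x
        = deriv (fun u : ℝ => -p * u ^ (-p - 1)) x := by
      simp only [Function.iterate_succ, Function.iterate_zero, Function.comp_apply, id]
      exact Filter.EventuallyEq.deriv_eq h1
    rw [h2, deriv_const_mul _ (Real.differentiableAt_rpow_const_of_ne _ (ne_of_gt hx0)),
      Real.deriv_rpow_const x (-p - 1)]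
    have h3 : -p * ((-p - 1) * x ^ (-p - 1 - 1)) = p * (p + 1) * x ^ (-p - 1 - 1) := by ring
    rw [h3]
    have : 0 < x ^ (-p - 1 - 1) := Real.rpow_pos_of_pos hx0 _
    positivity

lemma key_ineq {p a s t : ℝ} (hp : 0 < p) (ha : 0 < a) (hs : 0 < s) (ht : 0 < t) :
    (a + s) ^ (-p) + (a + t) ^ (-p) ≤ a ^ (-p) + (a + s + t) ^ (-p) := by
  have hc := convexOn_rpow_neg hp
  have hst : 0 < s + t := by linarith
  have hw1 : (0:ℝ) ≤ t / (s + t) := by positivity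
  have hw2 : (0:ℝ) ≤ s / (s + t) := by positivity
  have hsum : t / (s + t) + s / (s + t) = 1 := by field_simp; ring
  have hsum' : s / (s + t) + t / (s + t) = 1 := by field_simp
  have ha' : a ∈ Set.Ioi (0:ℝ) := ha
  have hast : a + s + t ∈ Set.Ioi (0:ℝ) := by simp; linarith
  have h1 := hc.2 ha' hast hw1 hw2 hsum
  have h2 := hc.2 ha' hast hw2 hw1 hsum'
  rw [smul_eq_mul, smul_eq_mul, smul_eq_mul] at h1 h2
  have e1 : t / (s + t) * a + s / (s + t) * (a + s + t) = a + s := by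
    field_simp; ring
  have e2 : s / (s + t) * a + t / (s + t) * (a + s + t) = a + t := by
    field_simp; ring
  rw [e1] at h1
  rw [e2] at h2
  rw [smul_eq_mul] at h1 h2
  beta_reduce at h1 h2
  have hadd := add_le_add h1 h2
  have e3 : t / (s + t) * a ^ (-p) + s / (s + t) * (a + s + t) ^ (-p)
      + (s / (s + t) * a ^ (-p) + t / (s + t) * (a + s + t) ^ (-p))
      = (t / (s + t) + s / (s + t)) * (a ^ (-p) + (a + s + t) ^ (-p)) := by ring
  rw [e3, hsum, one_mul] at hadd
  linarith

lemma normsq_reflect {n : ℕ} {i : ℕ} (hi : i < n) (x y : EuclideanSpace ℝ (Fin n)) :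
    ‖x - reflect i y‖ ^ 2 = ‖x - y‖ ^ 2 + 4 * x ⟨i, hi⟩ * y ⟨i, hi⟩ := by
  have hv : ∀ v : EuclideanSpace ℝ (Fin n), ‖v‖ ^ 2 = ∑ j, (v j) ^ 2 := by
    intro v
    rw [EuclideanSpace.norm_eq, Real.sq_sqrt (by positivity)]
    simp [sq_abs]
  rw [hv, hv]
  have hsub : ∀ (u w : EuclideanSpace ℝ (Fin n)) (j : Fin n), (u - w) j = u j - w j :=
    fun _ _ _ => rfl
  have step : ∀ j : Fin n, ((x - reflect i y) j) ^ 2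
      = ((x - y) j) ^ 2 + (if j = (⟨i, hi⟩ : Fin n) then 4 * x ⟨i, hi⟩ * y ⟨i, hi⟩ else 0) := by
    intro j
    rw [hsub, hsub]
    by_cases hj : j = (⟨i, hi⟩ : Fin n)
    · subst hj
      simp only [reflect, PiLp.toLp_apply, if_pos rfl, if_true, eq_self_iff_true]
      ring
    · have hj' : (j : ℕ) ≠ i := fun h => hj (Fin.ext h)
      simp [reflect, hj', hj]
  simp_rw [step]
  rw [Finset.sum_add_distrib, Finset.sum_ite_eq' Finset.univ]
  simp


/-- Positivity of the doubly anti-symmetrized kernel `K(x,y)` on the quarter space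
`I = {x₁ > 0, x₂ > 0}`. -/
theorem kernel_positive (n : ℕ) (hn : 2 ≤ n) (α : ℝ) (hα : 0 < α) (hα2 : α < 2)
    (x y : EuclideanSpace ℝ (Fin n))
    (hx1 : 0 < coord x 0) (hx2 : 0 < coord x 1)
    (hy1 : 0 < coord y 0) (hy2 : 0 < coord y 1) (hxy : x ≠ y) :
    0 ≤ ‖x - y‖ ^ (-((n : ℝ) + α)) - ‖x - reflect 0 y‖ ^ (-((n : ℝ) + α))
        - ‖x - reflect 1 y‖ ^ (-((n : ℝ) + α))
        + ‖x - reflect 0 (reflect 1 y)‖ ^ (-((n : ℝ) + α)) := by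
  have h0 : 0 < n := by omega
  have h1 : 1 < n := by omega
  have hx0 : 0 < x ⟨0, h0⟩ := by simpa [coord, h0] using hx1
  have hy0 : 0 < y ⟨0, h0⟩ := by simpa [coord, h0] using hy1
  have hx1' : 0 < x ⟨1, h1⟩ := by simpa [coord, h1] using hx2
  have hy1' : 0 < y ⟨1, h1⟩ := by simpa [coord, h1] using hy2
  have ha : 0 < ‖x - y‖ ^ 2 := by
    have : x - y ≠ 0 := sub_ne_zero.mpr hxy
    exact pow_pos (norm_pos_iff.mpr this) 2
  have hs : 0 < 4 * x ⟨0, h0⟩ * y ⟨0, h0⟩ := by positivity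
  have ht : 0 < 4 * x ⟨1, h1⟩ * y ⟨1, h1⟩ := by positivity
  have hp : 0 < ((n : ℝ) + α) / 2 := by positivity
  have hb : ‖x - reflect 0 y‖ ^ 2 = ‖x - y‖ ^ 2 + 4 * x ⟨0, h0⟩ * y ⟨0, h0⟩ :=
    normsq_reflect h0 x y
  have hc : ‖x - reflect 1 y‖ ^ 2 = ‖x - y‖ ^ 2 + 4 * x ⟨1, h1⟩ * y ⟨1, h1⟩ :=
    normsq_reflect h1 x y
  have hd0 : ‖x - reflect 0 (reflect 1 y)‖ ^ 2
      = ‖x - reflect 1 y‖ ^ 2 + 4 * x ⟨0, h0⟩ * (reflect 1 y) ⟨0, h0⟩ :=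
    normsq_reflect h0 x (reflect 1 y)
  have hry : (reflect 1 y) (⟨0, h0⟩ : Fin n) = y ⟨0, h0⟩ := by
    simp [reflect]
  have hd : ‖x - reflect 0 (reflect 1 y)‖ ^ 2
      = ‖x - y‖ ^ 2 + 4 * x ⟨0, h0⟩ * y ⟨0, h0⟩ + 4 * x ⟨1, h1⟩ * y ⟨1, h1⟩ := by
    rw [hd0, hc, hry]; ring
  have hconv : ∀ v : EuclideanSpace ℝ (Fin n),
      ‖v‖ ^ (-((n : ℝ) + α)) = (‖v‖ ^ 2) ^ (-(((n : ℝ) + α) / 2)) := by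
    intro v
    rw [← Real.rpow_natCast ‖v‖ 2, ← Real.rpow_mul (norm_nonneg v)]
    congr 1
    push_cast
    ring
  rw [hconv, hconv, hconv, hconv, hb, hc, hd]
  have := key_ineq hp ha hs ht
  linarith
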